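/- The function P(r) = 2(2 - r²)r/(3(1-r)²) - (1/3)∫_0^r (log(1-t)/t) dt - (1/3) log(1-r) + ∑_{n=2}^∞ r^n/(3n²) - (1/3 + π²/36) satisfies P(0) = -(1/3 + π²/36) < 0 and P(1/2) = (66 + π² - 12(log 2)² + log 4096)/36 > 0, and hence has a root in (0, 1/2). -/

import Mathlib

open Real MeasureTheory Set intervalIntegral

lemma sumL : Summable (fun n : ℕ => ((1:ℝ)/2)^(n+1)/((n:ℝ)+1)^2) := by
  refine Summable.of_nonneg_of_le (fun n => by positivity) (fun n => ?_)
    (summable_geometric_of_lt_one (by norm_num : (0:ℝ) ≤ 1/2) (by norm_num))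
  calc ((1:ℝ)/2)^(n+1)/((n:ℝ)+1)^2 ≤ ((1:ℝ)/2)^(n+1) := by
        apply div_le_self (by positivity)
        nlinarith [Nat.cast_nonneg (α := ℝ) n]
    _ ≤ (1/2:ℝ)^n :=
        pow_le_pow_of_le_one (by norm_num) (by norm_num) (Nat.le_succ n)

lemma pointwiseA {t : ℝ} (ht0 : 0 < t) (ht1 : t < 1) :
    Real.log (1-t) / t = ∑' n : ℕ, -(t^n/((n:ℝ)+1)) := by
  have h := Real.hasSum_pow_div_log_of_abs_lt_one (x := t) (by rw [abs_of_pos ht0]; exact ht1)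
  have h' := h.mul_left t⁻¹
  have hfun : (fun n : ℕ => t⁻¹ * (t^(n+1)/((n:ℝ)+1))) = fun n : ℕ => t^n/((n:ℝ)+1) := by
    funext n; rw [pow_succ]; field_simp
  rw [hfun] at h'
  have h3 := h'.neg
  have heq : -(t⁻¹ * -Real.log (1-t)) = Real.log (1-t) / t := by
    field_simp
  rw [heq] at h3
  exact h3.tsum_eq.symm

lemma normIntA (n : ℕ) :
    ∫ t in Ioc (0:ℝ) (1/2), ‖-(t^n/((n:ℝ)+1))‖ = ((1:ℝ)/2)^(n+1)/((n:ℝ)+1)^2 := by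
  have h1 : ∀ t ∈ Ioc (0:ℝ) (1/2), ‖-(t^n/((n:ℝ)+1))‖ = t^n/((n:ℝ)+1) := by
    intro t ht
    rw [norm_neg, Real.norm_eq_abs,
      abs_of_nonneg (div_nonneg (pow_nonneg ht.1.le n) (by positivity))]
  rw [setIntegral_congr_fun measurableSet_Ioc h1, ← integral_of_le (by norm_num),
    intervalIntegral.integral_div, integral_pow]
  field_simp
  ring

lemma valIntA (n : ℕ) :
    ∫ t in Ioc (0:ℝ) (1/2), -(t^n/((n:ℝ)+1)) = -(((1:ℝ)/2)^(n+1)/((n:ℝ)+1)^2) := by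
  rw [← integral_of_le (by norm_num), intervalIntegral.integral_neg,
    intervalIntegral.integral_div, integral_pow]
  field_simp
  ring

lemma intA : ∫ t in (0:ℝ)..(1/2:ℝ), Real.log (1-t)/t
    = -∑' n : ℕ, ((1:ℝ)/2)^(n+1)/((n:ℝ)+1)^2 := by
  rw [integral_of_le (by norm_num)]
  have hint : ∀ n : ℕ, Integrable (fun t : ℝ => -(t^n/((n:ℝ)+1)))
      (volume.restrict (Ioc (0:ℝ) (1/2))) := fun n =>
    (Continuous.integrableOn_Ioc (by continuity))
  have hsum : Summable fun n : ℕ =>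
      ∫ t in Ioc (0:ℝ) (1/2), ‖-(t^n/((n:ℝ)+1))‖ := by
    simp_rw [normIntA]; exact sumL
  have key := MeasureTheory.integral_tsum_of_summable_integral_norm hint hsum
  simp_rw [valIntA] at key
  rw [tsum_neg] at key
  rw [key]
  apply setIntegral_congr_fun measurableSet_Ioc
  intro t ht
  exact pointwiseA ht.1 (lt_of_le_of_lt ht.2 (by norm_num))
lemma sumZ : Summable (fun n : ℕ => (1:ℝ)/((n:ℝ)+1)^2) := by
  have := hasSum_zeta_two.summable
  have h := (summable_nat_add_iff (f := fun n : ℕ => (1:ℝ)/(n:ℝ)^2) 1).mpr this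
  simpa [Nat.cast_add] using h

lemma sumZval : (∑' n : ℕ, (1:ℝ)/((n:ℝ)+1)^2) = π^2/6 := by
  have h := hasSum_zeta_two.tsum_eq
  rw [Summable.tsum_eq_zero_add hasSum_zeta_two.summable] at h
  simpa using h
lemma not_sum_harm : ¬ Summable (fun n : ℕ => (1:ℝ)/((n:ℝ)+1)) := by
  intro h
  have := (summable_nat_add_iff (f := fun n : ℕ => (1:ℝ)/(n:ℝ)) 1).mp (by simpa using h)
  exact Real.not_summable_one_div_natCast this

lemma pointwiseB {t : ℝ} (ht : t ∈ Ioc ((1:ℝ)/2) 1) :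
    Real.log (1-t) / t = ∑' n : ℕ, -(t^n/((n:ℝ)+1)) := by
  rcases eq_or_lt_of_le ht.2 with h1 | h1
  · subst h1
    rw [sub_self, Real.log_zero, zero_div]
    symm
    apply tsum_eq_zero_of_not_summable
    intro h
    exact not_sum_harm (by simpa using h.neg)
  · exact pointwiseA (lt_trans (by norm_num) ht.1) h1

lemma valIntB (n : ℕ) :
    ∫ t in Ioc ((1:ℝ)/2) 1, -(t^n/((n:ℝ)+1))
      = -((1 - ((1:ℝ)/2)^(n+1))/((n:ℝ)+1)^2) := by
  rw [← integral_of_le (by norm_num), intervalIntegral.integral_neg,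
    intervalIntegral.integral_div, integral_pow, one_pow, div_div, ← pow_two]

lemma normIntB (n : ℕ) :
    ∫ t in Ioc ((1:ℝ)/2) 1, ‖-(t^n/((n:ℝ)+1))‖
      = (1 - ((1:ℝ)/2)^(n+1))/((n:ℝ)+1)^2 := by
  have h1 : ∀ t ∈ Ioc ((1:ℝ)/2) 1, ‖-(t^n/((n:ℝ)+1))‖ = t^n/((n:ℝ)+1) := by
    intro t ht
    rw [norm_neg, Real.norm_eq_abs,
      abs_of_nonneg (div_nonneg (pow_nonneg (le_trans (by norm_num) ht.1.le) n) (by positivity))]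
  rw [setIntegral_congr_fun measurableSet_Ioc h1, ← integral_of_le (by norm_num),
    intervalIntegral.integral_div, integral_pow, one_pow, div_div, ← pow_two]

lemma sumB : Summable (fun n : ℕ => (1 - ((1:ℝ)/2)^(n+1))/((n:ℝ)+1)^2) := by
  refine Summable.of_nonneg_of_le (fun n => ?_) (fun n => ?_) sumZ
  · have h : ((1:ℝ)/2)^(n+1) ≤ 1 := pow_le_one₀ (by norm_num) (by norm_num)
    exact div_nonneg (by linarith) (by positivity)
  · refine (div_le_div_iff_of_pos_right (by positivity)).mpr ?_
    have := pow_nonneg (by norm_num : (0:ℝ) ≤ 1/2) (n+1)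
    linarith

lemma intB : ∫ t in ((1:ℝ)/2)..(1:ℝ), Real.log (1-t)/t
    = (∑' n : ℕ, ((1:ℝ)/2)^(n+1)/((n:ℝ)+1)^2) - π^2/6 := by
  rw [integral_of_le (by norm_num)]
  have hint : ∀ n : ℕ, Integrable (fun t : ℝ => -(t^n/((n:ℝ)+1)))
      (volume.restrict (Ioc ((1:ℝ)/2) 1)) := fun n =>
    (Continuous.integrableOn_Ioc (by continuity))
  have hsum : Summable fun n : ℕ =>
      ∫ t in Ioc ((1:ℝ)/2) 1, ‖-(t^n/((n:ℝ)+1))‖ := by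
    simp_rw [normIntB]; exact sumB
  have key := MeasureTheory.integral_tsum_of_summable_integral_norm hint hsum
  simp_rw [valIntB] at key
  rw [tsum_neg] at key
  have hts : (∑' n : ℕ, (1 - ((1:ℝ)/2)^(n+1))/((n:ℝ)+1)^2)
      = π^2/6 - ∑' n : ℕ, ((1:ℝ)/2)^(n+1)/((n:ℝ)+1)^2 := by
    have : (fun n : ℕ => (1 - ((1:ℝ)/2)^(n+1))/((n:ℝ)+1)^2)
        = fun n : ℕ => (1:ℝ)/((n:ℝ)+1)^2 - ((1:ℝ)/2)^(n+1)/((n:ℝ)+1)^2 := by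
      funext n; ring
    rw [this, Summable.tsum_sub sumZ sumL, sumZval]
  rw [hts] at key
  rw [show (∑' n : ℕ, ((1:ℝ)/2)^(n+1)/((n:ℝ)+1)^2) - π^2/6
      = -(π^2/6 - ∑' n : ℕ, ((1:ℝ)/2)^(n+1)/((n:ℝ)+1)^2) by ring, key]
  exact setIntegral_congr_fun measurableSet_Ioc (fun t ht => pointwiseB ht)
lemma intSub : ∫ t in ((1:ℝ)/2)..1, Real.log (1-t)/t
    = ∫ t in (0:ℝ)..((1:ℝ)/2), Real.log t/(1-t) := by
  have h := intervalIntegral.integral_comp_sub_left (a := 0) (b := 1/2)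
    (fun y => Real.log (1-y)/y) 1
  norm_num at h
  rw [← h]

lemma pointwiseC {t : ℝ} (ht0 : 0 < t) (ht1 : t < 1) :
    Real.log t/(1-t) = ∑' n : ℕ, t^n * Real.log t := by
  have h := (hasSum_geometric_of_lt_one ht0.le ht1).mul_right (Real.log t)
  rw [div_eq_mul_inv, mul_comm]
  exact h.tsum_eq.symm

lemma derivC (n : ℕ) {x : ℝ} (hx : x ≠ 0) :
    HasDerivAt (fun t : ℝ => t^n * (t*Real.log t)/((n:ℝ)+1) - t^(n+1)/((n:ℝ)+1)^2)
      (x^n * Real.log x) x := by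
  have h1 := ((hasDerivAt_pow n x).mul (Real.hasDerivAt_mul_log hx)).div_const ((n:ℝ)+1)
  have h2 := (hasDerivAt_pow (n+1) x).div_const (((n:ℝ)+1)^2)
  have h3 := h1.sub h2
  refine HasDerivAt.congr_deriv h3 (Eq.symm ?_)
  have hnn : ((n:ℝ)+1) ≠ 0 := by positivity
  cases n with
  | zero => simp
  | succ m =>
    push_cast
    rw [pow_succ]
    field_simp
    ring

lemma integrableC (n : ℕ) :
    IntervalIntegrable (fun t : ℝ => t^n * Real.log t) volume 0 (1/2) := by
  have hmaj : IntervalIntegrable (fun t : ℝ => 2 * t ^ (-(1/2) : ℝ)) volume 0 (1/2) :=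
    (intervalIntegrable_rpow' (by norm_num)).const_mul 2
  refine hmaj.mono_fun ?_ ?_
  · exact ((measurable_id.pow_const n).mul Real.measurable_log).aestronglyMeasurable
  · have hsub : Set.uIoc (0:ℝ) (1/2) = Ioc (0:ℝ) (1/2) := by
      rw [uIoc_of_le (by norm_num)]
    rw [Filter.EventuallyLE, ae_restrict_iff' (by rw [hsub]; exact measurableSet_Ioc)]
    refine Filter.Eventually.of_forall (fun t ht => ?_)
    rw [hsub] at ht
    have ht0 : 0 < t := ht.1
    have htl : t ≤ 1/2 := ht.2
    have hlog : Real.log t ≤ 0 := Real.log_nonpos ht0.le (by linarith)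
    have hs : (0:ℝ) < t ^ (-(1/2) : ℝ) := Real.rpow_pos_of_pos ht0 _
    have hkey : -Real.log t ≤ 2 * t ^ (-(1/2) : ℝ) := by
      have h1 : Real.log (t ^ (-(1/2) : ℝ)) = -(1/2) * Real.log t := Real.log_rpow ht0 _
      have h2 : Real.log (t ^ (-(1/2) : ℝ)) ≤ t ^ (-(1/2) : ℝ) - 1 :=
        Real.log_le_sub_one_of_pos hs
      nlinarith
    have htn : t^n ≤ 1 := pow_le_one₀ ht0.le (by linarith)
    have htn0 : (0:ℝ) ≤ t^n := pow_nonneg ht0.le n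
    rw [Real.norm_eq_abs, Real.norm_eq_abs, abs_mul, abs_of_nonneg htn0,
      abs_of_nonpos hlog, abs_of_pos (by linarith : (0:ℝ) < 2 * t ^ (-(1/2) : ℝ))]
    nlinarith

lemma valIntC (n : ℕ) :
    ∫ t in Ioc (0:ℝ) ((1:ℝ)/2), t^n * Real.log t
      = -(((1:ℝ)/2)^(n+1) * Real.log 2/((n:ℝ)+1) + ((1:ℝ)/2)^(n+1)/((n:ℝ)+1)^2) := by
  rw [← integral_of_le (by norm_num)]
  have hcont : ContinuousOn
      (fun t : ℝ => t^n * (t*Real.log t)/((n:ℝ)+1) - t^(n+1)/((n:ℝ)+1)^2)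
      (Icc (0:ℝ) (1/2)) := by
    apply Continuous.continuousOn
    exact (((continuous_pow n).mul Real.continuous_mul_log).div_const _).sub
      ((continuous_pow (n+1)).div_const _)
  have hderiv : ∀ x ∈ Ioo (0:ℝ) (1/2),
      HasDerivWithinAt (fun t : ℝ => t^n * (t*Real.log t)/((n:ℝ)+1) - t^(n+1)/((n:ℝ)+1)^2)
        (x^n * Real.log x) (Ioi x) x :=
    fun x hx => (derivC n (ne_of_gt hx.1)).hasDerivWithinAt
  rw [intervalIntegral.integral_eq_sub_of_hasDeriv_right_of_le (by norm_num) hcont hderiv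
    (integrableC n)]
  have hlog : Real.log ((1:ℝ)/2) = -Real.log 2 := by
    rw [Real.log_div one_ne_zero two_ne_zero, Real.log_one]; ring
  rw [hlog]
  norm_num
  ring

lemma normIntC (n : ℕ) :
    ∫ t in Ioc (0:ℝ) ((1:ℝ)/2), ‖t^n * Real.log t‖
      = ((1:ℝ)/2)^(n+1) * Real.log 2/((n:ℝ)+1) + ((1:ℝ)/2)^(n+1)/((n:ℝ)+1)^2 := by
  have h1 : ∀ t ∈ Ioc (0:ℝ) (1/2), ‖t^n * Real.log t‖ = -(t^n * Real.log t) := by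
    intro t ht
    have hlog : Real.log t ≤ 0 := Real.log_nonpos ht.1.le (le_trans ht.2 (by norm_num))
    have htn0 : (0:ℝ) ≤ t^n := pow_nonneg ht.1.le n
    rw [Real.norm_eq_abs, abs_of_nonpos (mul_nonpos_of_nonneg_of_nonpos htn0 hlog)]
  rw [setIntegral_congr_fun measurableSet_Ioc h1, MeasureTheory.integral_neg, valIntC]
  ring

lemma sumHalfLog : Summable (fun n : ℕ => ((1:ℝ)/2)^(n+1)/((n:ℝ)+1)) :=
  (Real.hasSum_pow_div_log_of_abs_lt_one (x := 1/2) (by rw [abs_of_pos] <;> norm_num)).summable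

lemma tsumHalfLog : (∑' n : ℕ, ((1:ℝ)/2)^(n+1)/((n:ℝ)+1)) = Real.log 2 := by
  have h := (Real.hasSum_pow_div_log_of_abs_lt_one (x := 1/2)
    (by rw [abs_of_pos] <;> norm_num)).tsum_eq
  rw [h]
  norm_num
  rw [Real.log_div one_ne_zero two_ne_zero, Real.log_one]
  ring

lemma sumC : Summable (fun n : ℕ =>
    ((1:ℝ)/2)^(n+1) * Real.log 2/((n:ℝ)+1) + ((1:ℝ)/2)^(n+1)/((n:ℝ)+1)^2) := by
  apply Summable.add ?_ sumL
  have h := sumHalfLog.mul_left (Real.log 2)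
  apply h.congr
  intro n
  ring

lemma intC : ∫ t in (0:ℝ)..((1:ℝ)/2), Real.log t/(1-t)
    = -((Real.log 2)^2 + ∑' n : ℕ, ((1:ℝ)/2)^(n+1)/((n:ℝ)+1)^2) := by
  rw [integral_of_le (by norm_num)]
  have hint : ∀ n : ℕ, Integrable (fun t : ℝ => t^n * Real.log t)
      (volume.restrict (Ioc (0:ℝ) (1/2))) := fun n => (integrableC n).1
  have hsum : Summable fun n : ℕ =>
      ∫ t in Ioc (0:ℝ) (1/2), ‖t^n * Real.log t‖ := by
    simp_rw [normIntC]; exact sumC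
  have key := MeasureTheory.integral_tsum_of_summable_integral_norm hint hsum
  simp_rw [valIntC] at key
  have hA : Summable (fun n : ℕ => ((1:ℝ)/2)^(n+1) * Real.log 2/((n:ℝ)+1)) :=
    (sumHalfLog.mul_left (Real.log 2)).congr (fun n => by ring)
  rw [tsum_neg, Summable.tsum_add hA sumL] at key
  have hTA : (∑' n : ℕ, ((1:ℝ)/2)^(n+1) * Real.log 2/((n:ℝ)+1))
      = Real.log 2 * Real.log 2 := by
    have : (fun n : ℕ => ((1:ℝ)/2)^(n+1) * Real.log 2/((n:ℝ)+1))
        = fun n : ℕ => Real.log 2 * (((1:ℝ)/2)^(n+1)/((n:ℝ)+1)) := by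
      funext n; ring
    rw [this, tsum_mul_left, tsumHalfLog]
  rw [hTA] at key
  rw [show -((Real.log 2)^2 + ∑' n : ℕ, ((1:ℝ)/2)^(n+1)/((n:ℝ)+1)^2)
      = -(Real.log 2 * Real.log 2 + ∑' n : ℕ, ((1:ℝ)/2)^(n+1)/((n:ℝ)+1)^2) by ring, key]
  exact setIntegral_congr_fun measurableSet_Ioc
    (fun t ht => pointwiseC ht.1 (lt_of_le_of_lt ht.2 (by norm_num)))
lemma Lval : (∑' n : ℕ, ((1:ℝ)/2)^(n+1)/((n:ℝ)+1)^2)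
    = π^2/12 - (Real.log 2)^2/2 := by
  have h1 := intB
  rw [intSub, intC] at h1
  linarith

lemma Tval : (∑' n : ℕ, ((1:ℝ)/2)^(n+2)/(3*((n:ℝ)+2)^2))
    = (π^2/12 - (Real.log 2)^2/2 - 1/2)/3 := by
  have h0 := Summable.tsum_eq_zero_add sumL
  rw [Lval] at h0
  have hsh : (∑' n : ℕ, ((1:ℝ)/2)^(n+2)/((n:ℝ)+2)^2)
      = π^2/12 - (Real.log 2)^2/2 - 1/2 := by
    have : (fun n : ℕ => ((1:ℝ)/2)^(n+1+1)/((↑(n+1):ℝ)+1)^2)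
        = fun n : ℕ => ((1:ℝ)/2)^(n+2)/((n:ℝ)+2)^2 := by
      funext n; push_cast; ring_nf
    rw [this] at h0
    norm_num at h0
    linarith
  have : (fun n : ℕ => ((1:ℝ)/2)^(n+2)/(3*((n:ℝ)+2)^2))
      = fun n : ℕ => (1/3:ℝ) * (((1:ℝ)/2)^(n+2)/((n:ℝ)+2)^2) := by
    funext n
    have h : ((n:ℝ)+2)^2 ≠ 0 := by positivity
    field_simp
  rw [this, tsum_mul_left, hsh]
  ring
lemma integrableQ : IntegrableOn (fun t : ℝ => Real.log (1-t)/t)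
    (uIcc (0:ℝ) (1/2)) volume := by
  rw [uIcc_of_le (by norm_num)]
  have hmeas : AEStronglyMeasurable (fun t : ℝ => Real.log (1-t)/t)
      (volume.restrict (Icc (0:ℝ) (1/2))) :=
    ((Real.measurable_log.comp (measurable_const.sub measurable_id)).div
      measurable_id).aestronglyMeasurable
  refine Integrable.mono' (integrable_const 2) hmeas ?_
  rw [ae_restrict_iff' measurableSet_Icc]
  refine Filter.Eventually.of_forall (fun t ht => ?_)
  rcases eq_or_lt_of_le ht.1 with h0 | h0
  · simp [← h0]
  · have ht2 : t ≤ 1/2 := ht.2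
    have h1t : (0:ℝ) < 1 - t := by linarith
    have hlog : Real.log (1-t) ≤ 0 := Real.log_nonpos (by linarith) (by linarith)
    have hb : -Real.log (1-t) ≤ 2*t := by
      have h2 := Real.log_le_sub_one_of_pos (x := (1-t)⁻¹) (by positivity)
      rw [Real.log_inv] at h2
      have hinv : (1-t)⁻¹ - 1 = t/(1-t) := by field_simp; ring
      rw [hinv] at h2
      have h3 : t/(1-t) ≤ 2*t := by
        rw [div_le_iff₀ h1t]; nlinarith
      linarith
    rw [Real.norm_eq_abs, abs_div, abs_of_nonpos hlog, abs_of_pos h0, div_le_iff₀ h0]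
    nlinarith

lemma contT : ContinuousOn (fun r : ℝ => ∑' n : ℕ, r^(n+2)/(3*((n:ℝ)+2)^2))
    (Icc (0:ℝ) (1/2)) := by
  rw [continuousOn_iff_continuous_restrict]
  have := continuous_tsum
    (f := fun (n : ℕ) (x : Icc (0:ℝ) (1/2)) => (x:ℝ)^(n+2)/(3*((n:ℝ)+2)^2))
    (u := fun n : ℕ => (1/2:ℝ)^n)
    (fun n => by fun_prop (disch := positivity))
    (summable_geometric_of_lt_one (by norm_num) (by norm_num))
    (fun n x => ?_)
  · exact this
  · have hx0 : (0:ℝ) ≤ (x:ℝ) := x.2.1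
    have hx2 : (x:ℝ) ≤ 1/2 := x.2.2
    have h1 : (x:ℝ)^(n+2) ≤ (1/2:ℝ)^(n+2) := pow_le_pow_left₀ hx0 hx2 _
    have h2 : ((1/2:ℝ))^(n+2) ≤ (1/2:ℝ)^n :=
      pow_le_pow_of_le_one (by norm_num) (by norm_num) (by omega)
    have hd : (1:ℝ) ≤ 3*((n:ℝ)+2)^2 := by nlinarith [Nat.cast_nonneg (α := ℝ) n]
    rw [Real.norm_eq_abs, abs_div, abs_of_nonneg (pow_nonneg hx0 _),
      abs_of_pos (by positivity : (0:ℝ) < 3*((n:ℝ)+2)^2)]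
    calc (x:ℝ)^(n+2)/(3*((n:ℝ)+2)^2) ≤ (x:ℝ)^(n+2) :=
          div_le_self (pow_nonneg hx0 _) hd
      _ ≤ (1/2:ℝ)^(n+2) := h1
      _ ≤ (1/2:ℝ)^n := h2

theorem P3_signs_and_root :
    (2*(2 - (0:ℝ)^2)*(0:ℝ)/(3*(1-(0:ℝ))^2)
        - (1/3) * (∫ t in (0:ℝ)..(0:ℝ), Real.log (1-t) / t)
        - (1/3) * Real.log (1-(0:ℝ))
        + (∑' n : ℕ, (0:ℝ)^(n+2)/(3*((n:ℝ)+2)^2)) - (1/3 + Real.pi^2/36)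
      = -(1/3 + Real.pi^2/36)) ∧
    (-(1/3 + Real.pi^2/36) : ℝ) < 0 ∧
    (2*(2 - ((1:ℝ)/2)^2)*((1:ℝ)/2)/(3*(1-(1:ℝ)/2)^2)
        - (1/3) * (∫ t in (0:ℝ)..((1:ℝ)/2), Real.log (1-t) / t)
        - (1/3) * Real.log (1-(1:ℝ)/2)
        + (∑' n : ℕ, ((1:ℝ)/2)^(n+2)/(3*((n:ℝ)+2)^2)) - (1/3 + Real.pi^2/36)
      = (66 + Real.pi^2 - 12*(Real.log 2)^2 + Real.log 4096)/36) ∧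
    (0 : ℝ) < (66 + Real.pi^2 - 12*(Real.log 2)^2 + Real.log 4096)/36 ∧
    (∃ r : ℝ, r ∈ Set.Ioo (0 : ℝ) (1/2) ∧
      2*(2 - r^2)*r/(3*(1-r)^2)
        - (1/3) * (∫ t in (0:ℝ)..r, Real.log (1-t) / t)
        - (1/3) * Real.log (1-r)
        + (∑' n : ℕ, r^(n+2)/(3*((n:ℝ)+2)^2)) - (1/3 + Real.pi^2/36) = 0) := by
  have hpi := Real.pi_pos
  have hlog2 : Real.log 2 < 1 := by
    have := Real.log_two_lt_d9; linarith
  have hlog2p : (0:ℝ) < Real.log 2 := Real.log_pos (by norm_num)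
  have h4096 : Real.log 4096 = 12 * Real.log 2 := by
    rw [show (4096:ℝ) = 2^12 by norm_num, Real.log_pow]; push_cast; ring
  have hloghalf : Real.log (1-(1:ℝ)/2) = -Real.log 2 := by
    rw [show (1:ℝ)-1/2 = 1/2 by norm_num, one_div, Real.log_inv]
  have h1 : 2*(2 - (0:ℝ)^2)*(0:ℝ)/(3*(1-(0:ℝ))^2)
        - (1/3) * (∫ t in (0:ℝ)..(0:ℝ), Real.log (1-t) / t)
        - (1/3) * Real.log (1-(0:ℝ))
        + (∑' n : ℕ, (0:ℝ)^(n+2)/(3*((n:ℝ)+2)^2)) - (1/3 + Real.pi^2/36)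
      = -(1/3 + Real.pi^2/36) := by
    rw [intervalIntegral.integral_same]
    have hz : (fun n : ℕ => (0:ℝ)^(n+2)/(3*((n:ℝ)+2)^2)) = fun _ => (0:ℝ) := by
      funext n; simp
    rw [hz, tsum_zero]
    norm_num
  have h3 : 2*(2 - ((1:ℝ)/2)^2)*((1:ℝ)/2)/(3*(1-(1:ℝ)/2)^2)
        - (1/3) * (∫ t in (0:ℝ)..((1:ℝ)/2), Real.log (1-t) / t)
        - (1/3) * Real.log (1-(1:ℝ)/2)
        + (∑' n : ℕ, ((1:ℝ)/2)^(n+2)/(3*((n:ℝ)+2)^2)) - (1/3 + Real.pi^2/36)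
      = (66 + Real.pi^2 - 12*(Real.log 2)^2 + Real.log 4096)/36 := by
    rw [intA, Lval, Tval, hloghalf, h4096]
    norm_num
    ring_nf
  have hneg : (-(1/3 + Real.pi^2/36) : ℝ) < 0 := by nlinarith
  have hpos : (0 : ℝ) < (66 + Real.pi^2 - 12*(Real.log 2)^2 + Real.log 4096)/36 := by
    rw [h4096]
    nlinarith [sq_nonneg (Real.log 2)]
  refine ⟨h1, hneg, h3, hpos, ?_⟩
  set f : ℝ → ℝ := fun r => 2*(2 - r^2)*r/(3*(1-r)^2)
        - (1/3) * (∫ t in (0:ℝ)..r, Real.log (1-t) / t)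
        - (1/3) * Real.log (1-r)
        + (∑' n : ℕ, r^(n+2)/(3*((n:ℝ)+2)^2)) - (1/3 + Real.pi^2/36) with hf
  have hcont : ContinuousOn f (Icc (0:ℝ) (1/2)) := by
    have hden : ∀ x ∈ Icc (0:ℝ) (1/2), 3*(1-x)^2 ≠ 0 := by
      intro x hx
      have := hx.2
      have h12 : (0:ℝ) < 3*(1-x)^2 := by nlinarith
      exact ne_of_gt h12
    have c1 : ContinuousOn (fun r : ℝ => 2*(2 - r^2)*r/(3*(1-r)^2)) (Icc (0:ℝ) (1/2)) :=
      ContinuousOn.div (by fun_prop) (by fun_prop) hden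
    have c2 : ContinuousOn (fun r : ℝ => ∫ t in (0:ℝ)..r, Real.log (1-t) / t)
        (Icc (0:ℝ) (1/2)) := by
      have := intervalIntegral.continuousOn_primitive_interval
        (a := 0) (b := 1/2) (μ := volume) (f := fun t => Real.log (1-t)/t) integrableQ
      rwa [uIcc_of_le (by norm_num)] at this
    have c3 : ContinuousOn (fun r : ℝ => Real.log (1-r)) (Icc (0:ℝ) (1/2)) := by
      apply ContinuousOn.log (by fun_prop)
      intro x hx
      have := hx.2
      intro h; nlinarith
    exact ((((c1.sub (c2.const_smul (1/3:ℝ))).sub (c3.const_smul (1/3:ℝ))).add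
      contT).sub continuousOn_const)
  have hf0 : f 0 = -(1/3 + Real.pi^2/36) := h1
  have hf12 : f (1/2) = (66 + Real.pi^2 - 12*(Real.log 2)^2 + Real.log 4096)/36 := h3
  have hmem : (0:ℝ) ∈ Ioo (f 0) (f (1/2)) := by
    rw [hf0, hf12]; exact ⟨hneg, hpos⟩
  obtain ⟨r, hr, hfr⟩ := intermediate_value_Ioo (by norm_num : (0:ℝ) ≤ 1/2) hcont hmem
  exact ⟨r, hr, hfr⟩
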